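/- Let E and F be real inner product spaces, let r be a positive integer, and let φ : Fin r → E and ψ : Fin r → F be families of vectors satisfying the orthonormality relation ⟨φ_i, φ_j⟩_E + ⟨ψ_i, ψ_j⟩_F = δ_{ij} for all i, j. Let M be the Gram matrix of φ in E and assume M is positive definite. Then for every x ∈ ℝ^r, ‖Σ_{j=1}^r x_j ψ_j‖_F ≤ (‖Σ_{j=1}^r x_j φ_j‖_E² + ‖Σ_{j=1}^r x_j ψ_j‖_F²)^{1/2} ≤ √(‖M⁻¹‖₂) · ‖Σ_{j=1}^r x_j φ_j‖_E. -/

import Mathlib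

open scoped Matrix RealInnerProductSpace

/-- The spectral norm of a real `r × r` matrix: the operator norm of the matrix
acting on Euclidean space `ℝ^r` with the `ℓ²` norm. -/
noncomputable def matrixSpectralNorm {r : ℕ} (A : Matrix (Fin r) (Fin r) ℝ) : ℝ :=
  ‖Matrix.toEuclideanCLM (𝕜 := ℝ) A‖

/-- The Gram matrix of a family `φ : Fin r → E` in a real inner product space `E`:
the `r × r` real matrix with entries `M i j = ⟪φ j, φ i⟫`. -/
noncomputable def gramMatrix {E : Type*} [NormedAddCommGroup E] [InnerProductSpace ℝ E]
    {r : ℕ} (φ : Fin r → E) : Matrix (Fin r) (Fin r) ℝ :=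
  Matrix.of fun i j => ⟪φ j, φ i⟫

/-- Improved POD inverse estimate: if the families `φ`, `ψ` satisfy the joint
orthonormality relation `⟪φ i, φ j⟫ + ⟪ψ i, ψ j⟫ = δ i j` and the Gram matrix `M` of
`φ` is positive definite, then for every `x ∈ ℝ^r`,
`‖∑ x j • ψ j‖ ≤ (‖∑ x j • φ j‖² + ‖∑ x j • ψ j‖²)^(1/2) ≤ √(‖M⁻¹‖₂) ‖∑ x j • φ j‖`. -/
theorem pod_inverse_estimate_improved
    {E F : Type*} [NormedAddCommGroup E] [InnerProductSpace ℝ E]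
    [NormedAddCommGroup F] [InnerProductSpace ℝ F]
    (r : ℕ) (hr : 0 < r) (φ : Fin r → E) (ψ : Fin r → F)
    (horth : ∀ i j : Fin r, ⟪φ i, φ j⟫ + ⟪ψ i, ψ j⟫ = if i = j then (1 : ℝ) else 0)
    (hMpos : (gramMatrix φ).PosDef) :
    ∀ x : Fin r → ℝ,
      ‖∑ j, x j • ψ j‖ ≤ Real.sqrt (‖∑ j, x j • φ j‖ ^ 2 + ‖∑ j, x j • ψ j‖ ^ 2) ∧
      Real.sqrt (‖∑ j, x j • φ j‖ ^ 2 + ‖∑ j, x j • ψ j‖ ^ 2) ≤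
        Real.sqrt (matrixSpectralNorm (gramMatrix φ)⁻¹) * ‖∑ j, x j • φ j‖ := by
  intro x
  classical
  set M := gramMatrix φ with hMdef
  set p := ‖∑ j, x j • φ j‖ with hp
  set q := ‖∑ j, x j • ψ j‖ with hq
  set c := matrixSpectralNorm M⁻¹ with hc
  -- expansion of the quadratic form
  have hquad : ∀ u v : Fin r → ℝ, u ⬝ᵥ (M *ᵥ v) = ∑ i, ∑ j, u i * (⟪φ j, φ i⟫ * v j) := by
    intro u v
    simp [dotProduct, Matrix.mulVec, Finset.mul_sum, hMdef, gramMatrix]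
  -- symmetry of the quadratic form
  have hsym : ∀ u v : Fin r → ℝ, v ⬝ᵥ (M *ᵥ u) = u ⬝ᵥ (M *ᵥ v) := by
    intro u v
    rw [hquad, hquad, Finset.sum_comm]
    refine Finset.sum_congr rfl fun i _ => Finset.sum_congr rfl fun j _ => ?_
    rw [real_inner_comm (φ j) (φ i)]
    ring
  -- p² equals the M-quadratic form of x
  have ha : p ^ 2 = x ⬝ᵥ (M *ᵥ x) := by
    rw [hquad, hp, ← real_inner_self_eq_norm_sq, sum_inner]
    refine Finset.sum_congr rfl fun i _ => ?_
    rw [inner_sum]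
    refine Finset.sum_congr rfl fun j _ => ?_
    rw [real_inner_smul_left, real_inner_smul_right, real_inner_comm (φ i) (φ j)]; ring
  -- q² similarly for ψ
  have hb : q ^ 2 = ∑ i, ∑ j, x i * (⟪ψ i, ψ j⟫ * x j) := by
    rw [hq, ← real_inner_self_eq_norm_sq, sum_inner]
    refine Finset.sum_congr rfl fun i _ => ?_
    rw [inner_sum]
    refine Finset.sum_congr rfl fun j _ => ?_
    rw [real_inner_smul_left, real_inner_smul_right]; ring
  -- joint orthonormality: p² + q² = x ⬝ᵥ x
  have hsumsq : p ^ 2 + q ^ 2 = x ⬝ᵥ x := by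
    rw [ha, hb, hquad]
    have : ∀ i, (∑ j, x i * (⟪φ j, φ i⟫ * x j)) + ∑ j, x i * (⟪ψ i, ψ j⟫ * x j)
        = x i * x i := by
      intro i
      rw [← Finset.sum_add_distrib]
      have : ∀ j ∈ Finset.univ, x i * (⟪φ j, φ i⟫ * x j) + x i * (⟪ψ i, ψ j⟫ * x j)
          = x i * x j * (if i = j then (1:ℝ) else 0) := by
        intro j _
        rw [← horth i j, real_inner_comm (φ j) (φ i)]
        ring
      rw [Finset.sum_congr rfl this, Finset.sum_eq_single i]
      · simp
      · intro b _ hb'; simp [Ne.symm hb']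
      · intro h; exact absurd (Finset.mem_univ i) h
    rw [← Finset.sum_add_distrib]
    · simp only [this, dotProduct]
  -- Cauchy–Schwarz for the M-quadratic form
  have hCS : ∀ u v : Fin r → ℝ,
      (u ⬝ᵥ (M *ᵥ v)) ^ 2 ≤ (u ⬝ᵥ (M *ᵥ u)) * (v ⬝ᵥ (M *ᵥ v)) := by
    intro u v
    have hpsd := hMpos.posSemidef.dotProduct_mulVec_nonneg
    have hquadpos : ∀ t : ℝ,
        0 ≤ (v ⬝ᵥ (M *ᵥ v)) * (t * t) + (2 * (u ⬝ᵥ (M *ᵥ v))) * t + u ⬝ᵥ (M *ᵥ u) := by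
      intro t
      have h0 := hpsd (u + t • v)
      simp only [star_trivial] at h0
      calc (0:ℝ) ≤ (u + t • v) ⬝ᵥ (M *ᵥ (u + t • v)) := h0
        _ = (v ⬝ᵥ (M *ᵥ v)) * (t * t) + (2 * (u ⬝ᵥ (M *ᵥ v))) * t + u ⬝ᵥ (M *ᵥ u) := by
            rw [Matrix.mulVec_add, Matrix.mulVec_smul, add_dotProduct,
              smul_dotProduct, dotProduct_add, dotProduct_smul,
              dotProduct_add, dotProduct_smul, hsym v u]
            simp only [smul_eq_mul]
            ring
    have hd := discrim_le_zero hquadpos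
    rw [discrim] at hd
    nlinarith [hd]
  -- invertibility
  have hdet : IsUnit M.det := hMpos.det_pos.ne'.isUnit
  set u : Fin r → ℝ := M⁻¹ *ᵥ x with hu
  have hMu : M *ᵥ u = x := by
    rw [hu, Matrix.mulVec_mulVec, Matrix.mul_nonsing_inv _ hdet, Matrix.one_mulVec]
  -- spectral norm bound: (M⁻¹ *ᵥ x) ⬝ᵥ x ≤ c * (x ⬝ᵥ x)
  have hxnorm : (‖((WithLp.equiv 2 (Fin r → ℝ)).symm x : EuclideanSpace ℝ (Fin r))‖) ^ 2
      = x ⬝ᵥ x := by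
    rw [← real_inner_self_eq_norm_sq]
    simp [PiLp.inner_apply, dotProduct]
    rw [EuclideanSpace.norm_sq_eq]
    simp [sq]
  have hspec : u ⬝ᵥ x ≤ c * (x ⬝ᵥ x) := by
    set x' : EuclideanSpace ℝ (Fin r) := (WithLp.equiv 2 (Fin r → ℝ)).symm x with hx'
    have h1 : (⟪(Matrix.toEuclideanCLM (𝕜 := ℝ) M⁻¹) x', x'⟫ : ℝ) = u ⬝ᵥ x := by
      rw [hx', Matrix.toEuclideanCLM_toLp]
      simp [PiLp.inner_apply, dotProduct, hu, mul_comm]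
    have h2 : (⟪(Matrix.toEuclideanCLM (𝕜 := ℝ) M⁻¹) x', x'⟫ : ℝ)
        ≤ ‖(Matrix.toEuclideanCLM (𝕜 := ℝ) M⁻¹) x'‖ * ‖x'‖ := real_inner_le_norm _ _
    have h3 : ‖(Matrix.toEuclideanCLM (𝕜 := ℝ) M⁻¹) x'‖ ≤ c * ‖x'‖ :=
      (Matrix.toEuclideanCLM (𝕜 := ℝ) M⁻¹).le_opNorm x'
    have h4 : ‖x'‖ ^ 2 = x ⬝ᵥ x := hxnorm
    calc u ⬝ᵥ x = (⟪(Matrix.toEuclideanCLM (𝕜 := ℝ) M⁻¹) x', x'⟫ : ℝ) := h1.symm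
      _ ≤ ‖(Matrix.toEuclideanCLM (𝕜 := ℝ) M⁻¹) x'‖ * ‖x'‖ := h2
      _ ≤ (c * ‖x'‖) * ‖x'‖ := mul_le_mul_of_nonneg_right h3 (norm_nonneg x')
      _ = c * ‖x'‖ ^ 2 := by ring
      _ = c * (x ⬝ᵥ x) := by rw [h4]
  have hc0 : 0 ≤ c := norm_nonneg _
  -- key inequality: p² + q² ≤ c * p²
  have hkey : p ^ 2 + q ^ 2 ≤ c * p ^ 2 := by
    have hcs := hCS x u
    have hBxu : x ⬝ᵥ (M *ᵥ u) = x ⬝ᵥ x := by rw [hMu]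
    have hBuu : u ⬝ᵥ (M *ᵥ u) = u ⬝ᵥ x := by rw [hMu]
    rw [hBxu, ← ha] at hcs
    rw [hBuu] at hcs
    have hs0 : 0 ≤ p ^ 2 + q ^ 2 := by positivity
    rcases eq_or_lt_of_le hs0 with h | h
    · nlinarith [sq_nonneg p, sq_nonneg q]
    · have hs := hsumsq
      have hmul := mul_le_mul_of_nonneg_left hspec (sq_nonneg p)
      nlinarith [hcs, hmul, h, hs]
  have hq0 : 0 ≤ q := norm_nonneg _
  have hp0 : 0 ≤ p := norm_nonneg _
  constructor
  · calc q = Real.sqrt (q ^ 2) := (Real.sqrt_sq hq0).symm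
      _ ≤ Real.sqrt (p ^ 2 + q ^ 2) := Real.sqrt_le_sqrt (by nlinarith [sq_nonneg p])
  · calc Real.sqrt (p ^ 2 + q ^ 2) ≤ Real.sqrt (c * p ^ 2) := Real.sqrt_le_sqrt hkey
      _ = Real.sqrt c * p := by
          rw [Real.sqrt_mul hc0, Real.sqrt_sq hp0]
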